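/- Let G be a digraph on n vertices with at most 2n−2 arcs (counting loops), and suppose its underlying simple graph — the undirected graph on the same vertex set with an edge {u,v} for u ≠ v whenever (u,v) ∈ E(G) or (v,u) ∈ E(G) — is a tree on n vertices. Then G does not allow the nSSP: no matrix A ∈ M(G) has the nSSP. -/

import Mathlib

set_option maxHeartbeats 1000000

open Module Polynomial
open scoped DirectSum


open Matrix

/-- `A` has the non-symmetric Strong Spectral Property (nSSP): the only matrix `X`
with `A ∘ X = O` (Hadamard product) and `A Xᵀ - Xᵀ A = O` is `X = O`. -/
def HasNSSP {V : Type*} [Fintype V] (A : Matrix V V ℝ) : Prop :=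
  ∀ X : Matrix V V ℝ,
    (∀ i j, A i j * X i j = 0) → A * Xᵀ - Xᵀ * A = 0 → X = 0

/-- `A ∈ M(G)`: the entry `A i j` is nonzero exactly when `(i,j)` is an arc of the digraph. -/
def MemPattern {V : Type*} (E : Set (V × V)) (A : Matrix V V ℝ) : Prop :=
  ∀ i j, A i j ≠ 0 ↔ (i, j) ∈ E

/-- The digraph with arc set `E` requires the nSSP. -/
def RequiresNSSP {V : Type*} [Fintype V] (E : Set (V × V)) : Prop :=
  ∀ A : Matrix V V ℝ, MemPattern E A → HasNSSP A

/-- The digraph with arc set `E` allows the nSSP. -/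
def AllowsNSSP {V : Type*} [Fintype V] (E : Set (V × V)) : Prop :=
  ∃ A : Matrix V V ℝ, MemPattern E A ∧ HasNSSP A

/-- Out-neighbourhood `N⁺_G[v]`. -/
def outNbhd {V : Type*} (E : Set (V × V)) (v : V) : Set V := {u | (v, u) ∈ E}

/-- In-neighbourhood `N⁻_G[v]`. -/
def inNbhd {V : Type*} (E : Set (V × V)) (v : V) : Set V := {w | (w, v) ∈ E}

/-- The double path `P_{n,L}` on `n` vertices (0-indexed by `Fin n`, so that the
vertex with 1-based label `ℓ` is `⟨ℓ-1, _⟩`), with loops exactly at vertices in `L`. -/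
def doublePathE (n : ℕ) (L : Set (Fin n)) : Set (Fin n × Fin n) :=
  {q | q.1.val + 1 = q.2.val ∨ q.2.val + 1 = q.1.val ∨ (q.1 = q.2 ∧ q.1 ∈ L)}


/-- The linear map `X ↦ A Xᵀ - Xᵀ A`. -/
def commMap {n : ℕ} (A : Matrix (Fin n) (Fin n) ℝ) :
    Matrix (Fin n) (Fin n) ℝ →ₗ[ℝ] Matrix (Fin n) (Fin n) ℝ where
  toFun X := A * Xᵀ - Xᵀ * A
  map_add' X Y := by
    simp only [Matrix.transpose_add, Matrix.mul_add, Matrix.add_mul]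
    abel
  map_smul' c X := by
    simp only [Matrix.transpose_smul, Matrix.mul_smul, Matrix.smul_mul, RingHom.id_apply,
      smul_sub]

/-- The kernel of `commMap A` has dimension at least `n`
(equivalently, the centralizer of `A` has dimension at least `n`). -/
lemma n_le_finrank_ker_commMap {n : ℕ} (A : Matrix (Fin n) (Fin n) ℝ) :
    n ≤ Module.finrank ℝ ↥(LinearMap.ker (commMap A)) := by
  classical
  set f : (Fin n → ℝ) →ₗ[ℝ] (Fin n → ℝ) := Matrix.toLin' A with hf
  have htors : Module.IsTorsion ℝ[X] (Module.AEval' f) := by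
    intro x
    refine ⟨⟨f.charpoly, mem_nonZeroDivisors_of_ne_zero f.charpoly_monic.ne_zero⟩, ?_⟩
    have h0 : (Module.AEval'.of f).symm (f.charpoly • x) = 0 := by
      rw [Module.AEval.of_symm_smul, LinearMap.aeval_self_charpoly]
      rfl
    show f.charpoly • x = 0
    exact ((Module.AEval'.of f).symm.map_eq_zero_iff).mp h0
  obtain ⟨ι, hι, p, hp, e, ⟨eqv⟩⟩ := Module.equiv_directSum_of_isTorsion htors
  letI := hι
  letI := Classical.decEq ι
  let P := ∀ i : ι, ℝ[X] ⧸ (Submodule.span ℝ[X] {p i ^ e i})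
  let e2 : (⨁ i : ι, ℝ[X] ⧸ (Submodule.span ℝ[X] {p i ^ e i})) ≃ₗ[ℝ[X]] P :=
    DirectSum.linearEquivFunOnFintype ℝ[X] ι _
  let E' : Module.AEval' f ≃ₗ[ℝ[X]] P := eqv.trans e2
  let ψ : (Fin n → ℝ) ≃ₗ[ℝ] P :=
    (Module.AEval'.of f).trans (E'.restrictScalars ℝ)
  have key : ∀ v, ψ (f v) = (X : ℝ[X]) • ψ v := by
    intro v
    show E' ((Module.AEval'.of f) (f v)) = (X : ℝ[X]) • E' ((Module.AEval'.of f) v)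
    rw [← Module.AEval'.X_smul_of]; exact _root_.map_smul E' X _
  have key2 : ∀ w : P, ψ.symm ((X : ℝ[X]) • w) = f (ψ.symm w) := by
    intro w
    apply ψ.injective
    rw [ψ.apply_symm_apply, key, ψ.apply_symm_apply]
  let lm : P →ₗ[ℝ] Module.End ℝ P := (Algebra.lmul ℝ P).toLinearMap
  let cj : Module.End ℝ P ≃ₗ[ℝ] Module.End ℝ (Fin n → ℝ) := ψ.symm.conj
  let tm : ((Fin n → ℝ) →ₗ[ℝ] (Fin n → ℝ)) ≃ₗ[ℝ] Matrix (Fin n) (Fin n) ℝ :=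
    LinearMap.toMatrix'
  let tp : Matrix (Fin n) (Fin n) ℝ ≃ₗ[ℝ] Matrix (Fin n) (Fin n) ℝ :=
    Matrix.transposeLinearEquiv (Fin n) (Fin n) ℝ ℝ
  let Γ : P →ₗ[ℝ] Matrix (Fin n) (Fin n) ℝ :=
    tp.toLinearMap ∘ₗ tm.toLinearMap ∘ₗ cj.toLinearMap ∘ₗ lm
  have hcjapp : ∀ (s : P) (v : Fin n → ℝ), (cj (lm s)) v = ψ.symm (s * ψ v) := by
    intro s v
    simp only [cj, lm, LinearEquiv.conj_apply, LinearMap.comp_apply,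
      LinearEquiv.coe_coe, LinearEquiv.symm_symm, AlgHom.toLinearMap_apply]
    rfl
  have hg : ∀ s : P, f ∘ₗ (cj (lm s)) = (cj (lm s)) ∘ₗ f := by
    intro s
    apply LinearMap.ext
    intro v
    simp only [LinearMap.comp_apply, hcjapp]
    rw [key v, mul_smul_comm, key2]
  have hΓmem : ∀ s : P, Γ s ∈ LinearMap.ker (commMap A) := by
    intro s
    have hB : (Γ s)ᵀ = tm (cj (lm s)) := by
      show (tp (tm (cj (lm s))))ᵀ = tm (cj (lm s))
      simp [tp, Matrix.transpose_transpose]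
    have hAc : A = LinearMap.toMatrix' f := (LinearMap.toMatrix'_toLin' A).symm
    have hcm : A * (Γ s)ᵀ = (Γ s)ᵀ * A := by
      rw [hB]
      show A * LinearMap.toMatrix' (cj (lm s)) = LinearMap.toMatrix' (cj (lm s)) * A
      rw [hAc, ← LinearMap.toMatrix'_comp, ← LinearMap.toMatrix'_comp, hg]
    show A * (Γ s)ᵀ - (Γ s)ᵀ * A = 0
    rw [hcm, sub_self]
  have hlminj : Function.Injective lm := by
    intro s t hst
    have h1 := congrArg (fun g : Module.End ℝ P => g 1) hst
    simpa [lm] using h1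
  have hΓinj : Function.Injective Γ := by
    intro s t hst
    exact hlminj (cj.injective (tm.injective (tp.injective hst)))
  have hfr : Module.finrank ℝ P = n := by
    rw [← ψ.finrank_eq]
    simp [Module.finrank_fin_fun]
  calc n = Module.finrank ℝ P := hfr.symm
    _ ≤ Module.finrank ℝ ↥(LinearMap.ker (commMap A)) := by
        apply LinearMap.finrank_le_finrank_of_injective
          (f := Γ.codRestrict (LinearMap.ker (commMap A)) hΓmem)
        intro s t hst
        exact hΓinj (Subtype.ext_iff.mp hst)

/-- a digraph on `n` vertices with at most `2n - 2` arcs (loops included)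
whose underlying simple graph is a tree does not allow the nSSP. -/
theorem tree_few_arcs_not_allow_nSSP {n : ℕ}
    (E : Finset (Fin n × Fin n))
    (hcard : E.card ≤ 2 * n - 2)
    (htree : (SimpleGraph.mk
        (fun u v : Fin n => u ≠ v ∧ ((u, v) ∈ E ∨ (v, u) ∈ E))
        (by constructor; intro u v h; exact ⟨h.1.symm, Or.symm h.2⟩)
        (by constructor; intro v h; exact h.1 rfl)).IsTree) :
    ∀ A : Matrix (Fin n) (Fin n) ℝ,
      MemPattern (↑E : Set (Fin n × Fin n)) A → ¬ HasNSSP A := by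
  classical
  intro A hA hN
  have hne : Nonempty (Fin n) := htree.isConnected.nonempty
  have hn1 : 1 ≤ n := Fin.pos_iff_nonempty.mpr hne
  -- any function constant across arcs is constant
  have hconst : ∀ d : Fin n → ℝ, (∀ q ∈ E, d q.1 = d q.2) → ∀ u v : Fin n, d u = d v := by
    intro d hd u v
    obtain ⟨w⟩ := htree.isConnected.preconnected u v
    induction w with
    | nil => rfl
    | cons h _ ih =>
      rcases h.2 with h' | h'
      · exact (hd _ h').trans ih
      · exact ((hd _ h').symm).trans ih
  -- the restriction map from the commutant-kernel to entries on E
  set Kk := LinearMap.ker (commMap A) with hKkdef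
  let ρ : Kk →ₗ[ℝ] (↥E → ℝ) :=
    { toFun := fun Y q => (Y : Matrix (Fin n) (Fin n) ℝ) q.1.1 q.1.2
      map_add' := fun Y Z => rfl
      map_smul' := fun c Y => rfl }
  -- the bilinear pairing coming from diagonal matrices
  let B : (Fin n → ℝ) →ₗ[ℝ] Module.Dual ℝ (↥E → ℝ) :=
    LinearMap.mk₂ ℝ (fun d c => ∑ q : ↥E, (d q.1.1 - d q.1.2) * A q.1.1 q.1.2 * c q)
      (fun d d' c => by
        rw [← Finset.sum_add_distrib]
        refine Finset.sum_congr rfl fun q _ => ?_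
        simp only [Pi.add_apply]; ring)
      (fun r d c => by
        rw [Finset.smul_sum]
        refine Finset.sum_congr rfl fun q _ => ?_
        simp only [Pi.smul_apply, smul_eq_mul]; ring)
      (fun d c c' => by
        rw [← Finset.sum_add_distrib]
        refine Finset.sum_congr rfl fun q _ => ?_
        simp only [Pi.add_apply]; ring)
      (fun r d c => by
        rw [Finset.smul_sum]
        refine Finset.sum_congr rfl fun q _ => ?_
        simp only [Pi.smul_apply, smul_eq_mul]; ring)
  -- the range of ρ is annihilated by the range of B
  have hρW : LinearMap.range ρ ≤ (LinearMap.range B).dualCoannihilator := by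
    rintro _ ⟨Y, rfl⟩
    rw [Submodule.mem_dualCoannihilator]
    rintro φ ⟨d, rfl⟩
    show ∑ q : ↥E, (d q.1.1 - d q.1.2) * A q.1.1 q.1.2 *
        (Y : Matrix (Fin n) (Fin n) ℝ) q.1.1 q.1.2 = 0
    set M := (Y : Matrix (Fin n) (Fin n) ℝ) with hM
    have hAX : A * Mᵀ = Mᵀ * A := by
      have h2 : A * Mᵀ - Mᵀ * A = 0 := Y.2
      exact sub_eq_zero.mp h2
    have hdiag : ∀ i, ∑ j, A i j * M i j = ∑ j, M j i * A j i := by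
      intro i
      have h3 := congrFun (congrFun hAX i) i
      simpa [Matrix.mul_apply, Matrix.transpose_apply] using h3
    have hcoe : ∑ q : ↥E, (d q.1.1 - d q.1.2) * A q.1.1 q.1.2 * M q.1.1 q.1.2
        = ∑ q ∈ E, (d q.1 - d q.2) * A q.1 q.2 * M q.1 q.2 :=
      Finset.sum_coe_sort E (fun q => (d q.1 - d q.2) * A q.1 q.2 * M q.1 q.2)
    rw [hcoe]
    rw [Finset.sum_subset (Finset.subset_univ E) (fun q _ hq => by
      have hA0 : A q.1 q.2 = 0 := by
        by_contra h
        exact hq (by simpa using (hA q.1 q.2).mp h)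
      rw [hA0, mul_zero, zero_mul])]
    have hprod : ∑ q ∈ (Finset.univ : Finset (Fin n × Fin n)),
          (d q.1 - d q.2) * A q.1 q.2 * M q.1 q.2
        = ∑ i, ∑ j, (d i - d j) * A i j * M i j :=
      Fintype.sum_prod_type (fun q : Fin n × Fin n => (d q.1 - d q.2) * A q.1 q.2 * M q.1 q.2)
    rw [hprod]
    have expand : ∀ i, ∑ j, (d i - d j) * A i j * M i j
        = d i * (∑ j, A i j * M i j) - ∑ j, d j * (A i j * M i j) := by
      intro i
      rw [Finset.mul_sum, ← Finset.sum_sub_distrib]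
      exact Finset.sum_congr rfl fun j _ => by ring
    calc ∑ i, ∑ j, (d i - d j) * A i j * M i j
        = ∑ i, (d i * (∑ j, A i j * M i j)) - ∑ i, ∑ j, d j * (A i j * M i j) := by
          rw [← Finset.sum_sub_distrib]
          exact Finset.sum_congr rfl fun i _ => expand i
      _ = ∑ i, (d i * (∑ j, M j i * A j i)) - ∑ j, ∑ i, d j * (A i j * M i j) := by
          rw [Finset.sum_comm]
          congr 1
          exact Finset.sum_congr rfl fun i _ => by rw [hdiag i]
      _ = 0 := by
          rw [sub_eq_zero]
          refine Finset.sum_congr rfl fun j _ => ?_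
          rw [← Finset.mul_sum]
          congr 1
          exact Finset.sum_congr rfl fun i _ => mul_comm _ _
  -- kernel of B is the one-dimensional space of constant vectors
  let constMap : ℝ →ₗ[ℝ] (Fin n → ℝ) :=
    { toFun := fun c _ => c
      map_add' := fun _ _ => rfl
      map_smul' := fun _ _ => rfl }
  have hkerB : LinearMap.ker B = LinearMap.range constMap := by
    ext d
    simp only [LinearMap.mem_ker, LinearMap.mem_range]
    constructor
    · intro hd
      have hq : ∀ q ∈ E, d q.1 = d q.2 := by
        intro q hqE
        let c0 : ↥E → ℝ := Pi.single (⟨q, hqE⟩ : ↥E) 1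
        have h0 : B d c0 = 0 := by rw [hd]; rfl
        have hval : B d c0 = (d q.1 - d q.2) * A q.1 q.2 := by
          show ∑ q' : ↥E, (d q'.1.1 - d q'.1.2) * A q'.1.1 q'.1.2 * c0 q' = _
          rw [Finset.sum_eq_single (⟨q, hqE⟩ : ↥E)]
          · simp [c0]
          · intro b _ hb
            have : c0 b = 0 := Pi.single_eq_of_ne hb 1
            rw [this, mul_zero]
          · intro hmem
            exact absurd (Finset.mem_univ _) hmem
        rw [hval] at h0
        have hAq : A q.1 q.2 ≠ 0 := (hA q.1 q.2).mpr (by simpa using hqE)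
        rcases mul_eq_zero.mp h0 with h' | h'
        · exact sub_eq_zero.mp h'
        · exact absurd h' hAq
      exact ⟨d hne.some, funext fun v => hconst d hq hne.some v⟩
    · rintro ⟨c, rfl⟩
      apply LinearMap.ext
      intro c'
      show ∑ q : ↥E, ((fun _ => c) q.1.1 - (fun _ => c) q.1.2) * A q.1.1 q.1.2 * c' q = 0
      simp
  have hinjC : Function.Injective constMap := by
    intro a b hab
    exact congrFun hab hne.some
  -- finrank bookkeeping
  have hrkB : Module.finrank ℝ ↥(LinearMap.range B) + 1 = n := by
    have h1 : Module.finrank ℝ ↥(LinearMap.ker B) = 1 := by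
      rw [hkerB, LinearMap.finrank_range_of_inj hinjC, Module.finrank_self]
    have h2 := LinearMap.finrank_range_add_finrank_ker B
    rw [h1, Module.finrank_fin_fun] at h2
    exact h2
  have hWrank := Subspace.finrank_add_finrank_dualCoannihilator_eq (LinearMap.range B)
  have hEfin : Module.finrank ℝ (↥E → ℝ) = E.card := by
    rw [Module.finrank_pi]
    exact Fintype.card_coe E
  rw [hEfin] at hWrank
  have hrange_le : Module.finrank ℝ ↥(LinearMap.range ρ)
      ≤ Module.finrank ℝ ↥((LinearMap.range B).dualCoannihilator) :=
    Submodule.finrank_mono hρW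
  have hKfr : n ≤ Module.finrank ℝ ↥Kk := n_le_finrank_ker_commMap A
  have hrnρ := LinearMap.finrank_range_add_finrank_ker ρ
  have hker_pos : 0 < Module.finrank ℝ ↥(LinearMap.ker ρ) := by omega
  -- extract a nonzero matrix
  haveI : Nontrivial ↥(LinearMap.ker ρ) := Module.nontrivial_of_finrank_pos hker_pos
  obtain ⟨x, hx⟩ := exists_ne (0 : ↥(LinearMap.ker ρ))
  set Y : Matrix (Fin n) (Fin n) ℝ := ((x : ↥Kk) : Matrix (Fin n) (Fin n) ℝ) with hYdef
  have hY1 : ∀ i j, A i j * Y i j = 0 := by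
    intro i j
    by_cases hij : (i, j) ∈ E
    · have h0 : ρ (x : ↥Kk) = 0 := x.2
      have : Y i j = 0 := congrFun h0 ⟨(i, j), hij⟩
      rw [this, mul_zero]
    · have : A i j = 0 := by
        by_contra h
        exact hij (by simpa using (hA i j).mp h)
      rw [this, zero_mul]
  have hY2 : A * Yᵀ - Yᵀ * A = 0 := (x : ↥Kk).2
  have hY0 : Y ≠ 0 := by
    intro h
    apply hx
    apply Subtype.ext
    apply Subtype.ext
    exact h
  exact hY0 (hN Y hY1 hY2)
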